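/- Let α and β be coprime integers with α odd and positive and β odd. Then there exist an integer l ≥ 0 and integers m₀, m₁, …, m_l with m_i ≠ 0 for all 1 ≤ i ≤ l−1, such that the finite continued fraction [2m₀; 2m₁, …, 2m_{l−1}, 2m_l + 1] (whose last partial quotient is the odd integer 2m_l + 1 and all other partial quotients are the even integers 2m_i) is well defined (every tail with index i ≥ 1 is nonzero) and its value equals the rational number β/α. -/
import Mathlib

/-- The value of the finite continued fraction `[c₀; c₁, …, c_k]`, defined
recursively by `v_k = c_k` and `v_i = c_i + 1/v_{i+1}`. -/
def cfVal : List ℤ → ℚ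
  | [] => 0
  | [c] => (c : ℚ)
  | c :: cs => (c : ℚ) + (cfVal cs)⁻¹

/-- The continued fraction given by a list of partial quotients is well defined
if every tail value with index `i ≥ 1` is nonzero. -/
def CFWellDef (L : List ℤ) : Prop :=
  ∀ i : ℕ, 1 ≤ i → i < L.length → cfVal (L.drop i) ≠ 0

lemma cfVal_cons (c : ℤ) (L : List ℤ) (h : L ≠ []) :
    cfVal (c :: L) = (c : ℚ) + (cfVal L)⁻¹ := by
  cases L with
  | nil => exact absurd rfl h
  | cons a as => rfl

lemma cf_aux : ∀ n : ℕ, ∀ α β : ℤ, α.natAbs ≤ n → IsCoprime α β → Odd α → 0 < α → Odd β →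
    ∃ (l : ℕ) (m : ℕ → ℤ),
      (∀ i : ℕ, 1 ≤ i → i < l → m i ≠ 0) ∧
      (α < |β| → m 0 ≠ 0) ∧
      CFWellDef (((List.range l).map fun i => 2 * m i) ++ [2 * m l + 1]) ∧
      cfVal (((List.range l).map fun i => 2 * m i) ++ [2 * m l + 1]) = (β : ℚ) / (α : ℚ) := by
  intro n
  induction n with
  | zero => intro α β hn _ _ hαpos _; omega
  | succ n ih =>
    intro α β hn hcop hαodd hαpos hβodd
    obtain ⟨k, hk⟩ := hβodd
    by_cases hα1 : α = 1
    · subst hα1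
      refine ⟨0, fun _ => k, by omega, ?_, ?_, ?_⟩
      · intro h hm0
        subst hm0
        simp at hk
        subst hk
        simp at h
      · intro i hi1 hilen
        simp at hilen
        omega
      · show cfVal [2 * k + 1] = _
        rw [show (2 * k + 1 : ℤ) = β by omega]
        simp [cfVal]
    · -- α ≥ 3
      have hα3 : 3 ≤ α := by
        rcases hαodd with ⟨j, hj⟩
        omega
      obtain ⟨q, hq⟩ : ∃ q : ℤ, q = β / (2 * α) := ⟨_, rfl⟩
      obtain ⟨t, ht⟩ : ∃ t : ℤ, t = β % (2 * α) := ⟨_, rfl⟩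
      have h2α : (0:ℤ) < 2 * α := by omega
      have htlt : t < 2 * α := ht ▸ Int.emod_lt_of_pos β h2α
      have htnn : 0 ≤ t := ht ▸ Int.emod_nonneg β (by omega)
      have hβqt : β = 2 * α * q + t := by rw [hq, ht]; exact (Int.mul_ediv_add_emod β (2*α)).symm
      have htodd : Odd t := ⟨k - α * q, by linear_combination hk - hβqt⟩
      have htne : t ≠ α := by
        intro hta
        have hdvd : α ∣ β := ⟨2 * q + 1, by rw [hβqt, hta]; ring⟩
        have := (hcop.isUnit_of_dvd' dvd_rfl hdvd)
        rw [Int.isUnit_iff] at this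
        omega
      obtain ⟨m₀, hm₀⟩ : ∃ m₀ : ℤ, m₀ = if t < α then q else q + 1 := ⟨_, rfl⟩
      obtain ⟨β', hβ'⟩ : ∃ β' : ℤ, β' = β - 2 * m₀ * α := ⟨_, rfl⟩
      have hβ't : β' = if t < α then t - 0 else t - 2 * α := by
        rw [hβ', hm₀]; split_ifs <;> rw [hβqt] <;> ring
      have hβ'odd : Odd β' := by
        rcases htodd with ⟨j, hj⟩
        rw [hβ't]; split_ifs
        · exact ⟨j, by omega⟩
        · exact ⟨j - α, by rw [hj]; ring⟩
      have hβ'ne : β' ≠ 0 := by rcases hβ'odd with ⟨j, hj⟩; omega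
      have hβ'lt : |β'| < α := by
        rw [abs_lt, hβ't]
        split_ifs with h
        · omega
        · have : α < t := by omega
          omega
      have hcop' : IsCoprime α β' := by
        have := hcop.add_mul_left_right (-(2 * m₀))
        have he : β + α * -(2 * m₀) = β' := by rw [hβ']; ring
        rwa [he] at this
      obtain ⟨α₂, hα₂⟩ : ∃ α₂ : ℤ, α₂ = |β'| := ⟨_, rfl⟩
      obtain ⟨β₂, hβ₂⟩ : ∃ β₂ : ℤ, β₂ = if 0 ≤ β' then α else -α := ⟨_, rfl⟩
      have hα₂pos : 0 < α₂ := hα₂ ▸ abs_pos.mpr hβ'ne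
      have hα₂odd : Odd α₂ := by
        rcases abs_choice β' with h | h <;> rw [hα₂, h]
        · exact hβ'odd
        · exact hβ'odd.neg
      have hβ₂odd : Odd β₂ := by
        rw [hβ₂]; split_ifs
        · exact hαodd
        · exact hαodd.neg
      have hβ₂ne : β₂ ≠ 0 := by rw [hβ₂]; split_ifs <;> omega
      have habs₂ : |β₂| = α := by
        rw [hβ₂]; split_ifs
        · exact abs_of_pos hαpos
        · rw [abs_neg]; exact abs_of_pos hαpos
      have hcop₂ : IsCoprime α₂ β₂ := by
        rw [Int.isCoprime_iff_gcd_eq_one] at hcop' ⊢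
        rw [Int.gcd] at hcop' ⊢
        rw [hα₂, Int.natAbs_abs]
        have h1 : β₂.natAbs = α.natAbs := by rw [hβ₂]; split_ifs <;> simp
        rw [h1, Nat.gcd_comm]
        exact hcop'
      have hn₂ : α₂.natAbs ≤ n := by
        have h1 : α₂ < α := hα₂ ▸ hβ'lt
        omega
      obtain ⟨l₁, m₁, hm₁, hm₁0, hwd₁, hval₁⟩ := ih α₂ β₂ hn₂ hcop₂ hα₂odd hα₂pos hβ₂odd
      have hm₁0' : m₁ 0 ≠ 0 := hm₁0 (by rw [habs₂, hα₂]; exact hβ'lt)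
      set L₁ := ((List.range l₁).map fun i => 2 * m₁ i) ++ [2 * m₁ l₁ + 1] with hL₁
      have hL₁ne : L₁ ≠ [] := by simp [hL₁]
      have hL₁len : L₁.length = l₁ + 1 := by simp [hL₁]
      have hval₁ne : cfVal L₁ ≠ 0 := by
        rw [hval₁]
        exact div_ne_zero (by exact_mod_cast hβ₂ne) (by exact_mod_cast hα₂pos.ne')
      refine ⟨l₁ + 1, fun i => if i = 0 then m₀ else m₁ (i - 1), ?_, ?_, ?_, ?_⟩
      · intro i hi1 hil
        have hi0 : i ≠ 0 := by omega
        show (if i = 0 then m₀ else m₁ (i - 1)) ≠ 0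
        rw [if_neg hi0]
        rcases Nat.eq_or_lt_of_le hi1 with h | h
        · rw [show i - 1 = 0 by omega]
          exact hm₁0'
        · exact hm₁ (i - 1) (by omega) (by omega)
      · intro hαβ h0
        have h0' : m₀ = 0 := by simpa using h0
        have hββ : β' = β := by rw [hβ', h0']; ring
        rw [hββ] at hβ'lt
        omega
      all_goals
        have hlist : ((List.range (l₁ + 1)).map fun i =>
              2 * (if i = 0 then m₀ else m₁ (i - 1))) ++
            [2 * (if l₁ + 1 = 0 then m₀ else m₁ (l₁ + 1 - 1)) + 1] = (2 * m₀) :: L₁ := by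
          rw [List.range_succ_eq_map, List.map_cons, List.map_map]
          simp [hL₁, Function.comp]
      · -- CFWellDef
        rw [hlist]
        intro i hi1 hilen
        simp only [List.length_cons, hL₁len] at hilen
        cases i with
        | zero => omega
        | succ j =>
          rw [List.drop_succ_cons]
          cases j with
          | zero => simpa using hval₁ne
          | succ j' =>
            exact hwd₁ (j' + 1) (by omega) (by rw [hL₁len]; omega)
      · -- value
        rw [hlist, cfVal_cons _ _ hL₁ne, hval₁]
        have hαQ : (α : ℚ) ≠ 0 := by exact_mod_cast hαpos.ne'
        have hβ'Q : (β' : ℚ) ≠ 0 := by exact_mod_cast hβ'ne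
        have hβeq : (β : ℚ) = 2 * m₀ * α + β' := by
          have : β = 2 * m₀ * α + β' := by rw [hβ']; ring
          exact_mod_cast this
        have hratio : ((β₂ : ℚ) / (α₂ : ℚ))⁻¹ = (β' : ℚ) / (α : ℚ) := by
          rw [inv_div]
          rcases le_or_gt 0 β' with h | h
          · rw [hα₂, hβ₂, if_pos h, abs_of_nonneg h]
          · rw [hα₂, hβ₂, if_neg (by omega), abs_of_neg h]
            push_cast
            rw [neg_div_neg_eq]
        rw [hratio, hβeq]
        push_cast
        field_simp

theorem continued_fraction_expansion_alpha_odd_beta_odd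
    (α β : ℤ) (hcop : IsCoprime α β) (hαodd : Odd α) (hαpos : 0 < α) (hβodd : Odd β) :
    ∃ (l : ℕ) (m : ℕ → ℤ),
      (∀ i : ℕ, 1 ≤ i → i < l → m i ≠ 0) ∧
      CFWellDef (((List.range l).map fun i => 2 * m i) ++ [2 * m l + 1]) ∧
      cfVal (((List.range l).map fun i => 2 * m i) ++ [2 * m l + 1]) = (β : ℚ) / (α : ℚ) := by
  obtain ⟨l, m, h1, _, h3, h4⟩ := cf_aux α.natAbs α β le_rfl hcop hαodd hαpos hβodd
  exact ⟨l, m, h1, h3, h4⟩
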